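/- Let p be an odd prime. For each α ∈ {1,…,p−1}, let A_α be the p×p binary array whose row i (for i ∈ {0,…,p−1}) is v_r, where r ∈ {0,…,p−1} is the unique solution of r ≡ αi (mod p). Then for all distinct α, β ∈ {1,…,p−1}: (a) |A_α A_β|_{(1,0)} = |A_α A_β|_{(0,1)} = (p²−1)/4; (b) |A_α A_β|_{(0,0)} = (p−1)²/4; (c) |A_α A_β|_{(1,1)} = (p+1)²/4. -/

import Mathlib

/-- The vector `v` of length `p` with `(p+1)/2` ones followed by `(p-1)/2` zeros,
shifted cyclically `i` times: position `j` holds the original entry at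
`(j - i) mod p`. -/
def shiftedV (p i : ℕ) (j : Fin p) : Fin 2 :=
  if ((j : ℕ) + (p - i % p)) % p < (p + 1) / 2 then 1 else 0

/-- `|ab|_{(x,y)}`: the number of positions `j` with `a j = x` and `b j = y`. -/
def vcount (p : ℕ) (a b : Fin p → Fin 2) (x y : Fin 2) : ℕ :=
  ((Finset.univ : Finset (Fin p)).filter (fun j => a j = x ∧ b j = y)).card

/-- The p × p array A_α whose row i is v_r with r ≡ α·i (mod p). -/
def Aarr (p α : ℕ) (i j : Fin p) : Fin 2 := shiftedV p (α * (i : ℕ)) j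

/--  for p × p binary arrays. -/
def acount (p : ℕ) (A B : Fin p → Fin p → Fin 2) (x y : Fin 2) : ℕ :=
  ((Finset.univ : Finset (Fin p × Fin p)).filter
      (fun c => A c.1 c.2 = x ∧ B c.1 c.2 = y)).card

lemma shifted_val {p : ℕ} [NeZero p] (m : ℕ) (j : Fin p) :
    ((j : ZMod p) - (m : ZMod p)).val = ((j : ℕ) + (p - m % p)) % p := by
  have hp0 : 0 < p := Nat.pos_of_ne_zero (NeZero.ne p)
  have h1 : ((((j : ℕ) + (p - m % p)) % p : ℕ) : ZMod p) = (j : ZMod p) - m := by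
    rw [ZMod.natCast_mod, Nat.cast_add]
    have h2 : ((p - m % p : ℕ) : ZMod p) = -(m : ZMod p) := by
      have h3 : ((p - m % p : ℕ) : ZMod p) + ((m % p : ℕ) : ZMod p) = 0 := by
        rw [← Nat.cast_add, Nat.sub_add_cancel (Nat.mod_lt m hp0).le, ZMod.natCast_self]
      rw [ZMod.natCast_mod] at h3
      linear_combination h3
    rw [h2]; ring
  rw [← h1, ZMod.val_cast_of_lt (Nat.mod_lt _ hp0)]

lemma aarr_eq {p : ℕ} [NeZero p] (α : ℕ) (i j : Fin p) (x : Fin 2) :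
    Aarr p α i j = x ↔
      (((j : ZMod p) - (α : ZMod p) * (i : ZMod p)).val < (p + 1) / 2 ↔ x = 1) := by
  have h : ((j : ZMod p) - (α : ZMod p) * (i : ZMod p)).val
      = ((j : ℕ) + (p - (α * (i : ℕ)) % p)) % p := by
    rw [← shifted_val (α * (i : ℕ)) j]; push_cast; ring_nf
  rw [Aarr, shiftedV, h]
  by_cases hC : ((j : ℕ) + (p - (α * (i : ℕ)) % p)) % p < (p + 1) / 2 <;>
    fin_cases x <;> simp [hC]

lemma card_val_lt {p : ℕ} [NeZero p] (h : ℕ) (hh : h ≤ p) :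
    (Finset.univ.filter (fun u : ZMod p => u.val < h)).card = h := by
  rw [← Finset.card_range h]
  apply Finset.card_nbij' (fun u => ZMod.val u) (fun n => (n : ZMod p))
  · intro a ha; simp at ha ⊢; exact ha
  · intro n hn; simp at hn ⊢
    calc n % p ≤ n := Nat.mod_le n p
    _ < h := hn
  · intro a _; exact ZMod.natCast_zmod_val a
  · intro n hn; simp at hn; exact ZMod.val_cast_of_lt (lt_of_lt_of_le hn hh)

theorem count_A_alpha_A_beta (p : ℕ) (hp : p.Prime) (hodd : Odd p)
    (α β : ℕ) (hα1 : 1 ≤ α) (hα2 : α ≤ p - 1) (hβ1 : 1 ≤ β) (hβ2 : β ≤ p - 1)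
    (hαβ : α ≠ β) :
    acount p (Aarr p α) (Aarr p β) 1 0 = (p ^ 2 - 1) / 4 ∧
    acount p (Aarr p α) (Aarr p β) 0 1 = (p ^ 2 - 1) / 4 ∧
    acount p (Aarr p α) (Aarr p β) 0 0 = (p - 1) ^ 2 / 4 ∧
    acount p (Aarr p α) (Aarr p β) 1 1 = (p + 1) ^ 2 / 4 := by
  haveI : Fact p.Prime := ⟨hp⟩
  haveI : NeZero p := ⟨hp.pos.ne'⟩
  have hp2 : 2 ≤ p := hp.two_le
  have hαp : α < p := by omega
  have hβp : β < p := by omega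
  set h : ℕ := (p + 1) / 2 with hh
  have hd : (β : ZMod p) - (α : ZMod p) ≠ 0 := by
    intro hd0
    have he : (β : ZMod p) = (α : ZMod p) := by
      linear_combination hd0
    have := congrArg ZMod.val he
    rw [ZMod.val_cast_of_lt hβp, ZMod.val_cast_of_lt hαp] at this
    exact hαβ this.symm
  -- the key counting identity
  have key : ∀ x y : Fin 2, acount p (Aarr p α) (Aarr p β) x y =
      (Finset.univ.filter (fun u : ZMod p => (u.val < h ↔ x = 1))).card *
      (Finset.univ.filter (fun u : ZMod p => (u.val < h ↔ y = 1))).card := by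
    intro x y
    rw [← Finset.card_product, ← Finset.filter_product, Finset.univ_product_univ]
    rw [acount]
    apply Finset.card_nbij'
      (fun c : Fin p × Fin p =>
        ((c.2 : ZMod p) - (α : ZMod p) * (c.1 : ZMod p),
         (c.2 : ZMod p) - (β : ZMod p) * (c.1 : ZMod p)))
      (fun c : ZMod p × ZMod p =>
        (⟨((c.1 - c.2) * ((β : ZMod p) - (α : ZMod p))⁻¹).val, ZMod.val_lt _⟩,
         ⟨(c.1 + (α : ZMod p) * ((c.1 - c.2) * ((β : ZMod p) - (α : ZMod p))⁻¹)).val, ZMod.val_lt _⟩))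
    · intro a ha
      simp only [Finset.mem_coe, Finset.mem_filter, Finset.mem_univ, true_and] at ha ⊢
      rw [aarr_eq, aarr_eq] at ha
      exact ha
    · intro c hc
      simp only [Finset.mem_coe, Finset.mem_filter, Finset.mem_univ, true_and] at hc ⊢
      rw [aarr_eq, aarr_eq]
      have e1 : ((((c.1 - c.2) * ((β : ZMod p) - (α : ZMod p))⁻¹).val : ℕ) : ZMod p) = (c.1 - c.2) * ((β : ZMod p) - (α : ZMod p))⁻¹ :=
        ZMod.natCast_zmod_val _
      have e2 : (((c.1 + (α : ZMod p) * ((c.1 - c.2) * ((β : ZMod p) - (α : ZMod p))⁻¹)).val : ℕ) : ZMod p)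
          = c.1 + (α : ZMod p) * ((c.1 - c.2) * ((β : ZMod p) - (α : ZMod p))⁻¹) := ZMod.natCast_zmod_val _
      simp only [Fin.val_mk] at *
      rw [e1, e2]
      have key1 : c.1 + (α : ZMod p) * ((c.1 - c.2) * ((β : ZMod p) - (α : ZMod p))⁻¹)
          - (α : ZMod p) * ((c.1 - c.2) * ((β : ZMod p) - (α : ZMod p))⁻¹) = c.1 := by ring
      have key2 : c.1 + (α : ZMod p) * ((c.1 - c.2) * ((β : ZMod p) - (α : ZMod p))⁻¹)
          - (β : ZMod p) * ((c.1 - c.2) * ((β : ZMod p) - (α : ZMod p))⁻¹) = c.2 := by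
        have h5 : ((c.1 - c.2) * ((β : ZMod p) - (α : ZMod p))⁻¹) * ((β : ZMod p) - (α : ZMod p))
            = c.1 - c.2 := inv_mul_cancel_right₀ hd _
        linear_combination -h5
      rw [key1, key2]
      exact hc
    · intro a _
      have e1 : ((a.2 : ZMod p) - (α : ZMod p) * (a.1 : ZMod p))
          - ((a.2 : ZMod p) - (β : ZMod p) * (a.1 : ZMod p))
          = ((β : ZMod p) - (α : ZMod p)) * (a.1 : ZMod p) := by ring
      have e2 : (((a.2 : ZMod p) - (α : ZMod p) * (a.1 : ZMod p))
          - ((a.2 : ZMod p) - (β : ZMod p) * (a.1 : ZMod p))) * ((β : ZMod p) - (α : ZMod p))⁻¹ = (a.1 : ZMod p) := by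
        rw [e1, mul_comm ((β : ZMod p) - (α : ZMod p)), mul_inv_cancel_right₀ hd]
      ext
      · simp only
        rw [e2, ZMod.val_cast_of_lt a.1.isLt]
      · simp only
        rw [e2]
        have : (a.2 : ZMod p) - (α : ZMod p) * (a.1 : ZMod p)
            + (α : ZMod p) * (a.1 : ZMod p) = (a.2 : ZMod p) := by ring
        rw [this, ZMod.val_cast_of_lt a.2.isLt]
    · intro c _
      have e1 : ((((c.1 - c.2) * ((β : ZMod p) - (α : ZMod p))⁻¹).val : ℕ) : ZMod p) = (c.1 - c.2) * ((β : ZMod p) - (α : ZMod p))⁻¹ :=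
        ZMod.natCast_zmod_val _
      have e2 : (((c.1 + (α : ZMod p) * ((c.1 - c.2) * ((β : ZMod p) - (α : ZMod p))⁻¹)).val : ℕ) : ZMod p)
          = c.1 + (α : ZMod p) * ((c.1 - c.2) * ((β : ZMod p) - (α : ZMod p))⁻¹) := ZMod.natCast_zmod_val _
      have key2 : c.1 + (α : ZMod p) * ((c.1 - c.2) * ((β : ZMod p) - (α : ZMod p))⁻¹)
          - (β : ZMod p) * ((c.1 - c.2) * ((β : ZMod p) - (α : ZMod p))⁻¹) = c.2 := by
        have h5 : ((c.1 - c.2) * ((β : ZMod p) - (α : ZMod p))⁻¹) * ((β : ZMod p) - (α : ZMod p))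
            = c.1 - c.2 := inv_mul_cancel_right₀ hd _
        linear_combination -h5
      ext
      · simp only [Fin.val_mk]
        rw [e1, e2]
        ring
      · simp only [Fin.val_mk]
        rw [e1, e2]
        linear_combination key2
  -- the two basic counts
  have hhp : h ≤ p := by omega
  have c1 : (Finset.univ.filter (fun u : ZMod p => (u.val < h ↔ (1 : Fin 2) = 1))).card
      = h := by
    simp only [eq_self_iff_true, iff_true]
    exact card_val_lt h hhp
  have c0 : (Finset.univ.filter (fun u : ZMod p => (u.val < h ↔ (0 : Fin 2) = 1))).card
      = p - h := by
    have hsplit := Finset.card_filter_add_card_filter_not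
      (s := (Finset.univ : Finset (ZMod p))) (p := fun u : ZMod p => u.val < h)
    rw [card_val_lt h hhp, Finset.card_univ, ZMod.card] at hsplit
    have h01 : ((0 : Fin 2) = 1) = False := by simp
    simp only [h01, iff_false]
    omega
  obtain ⟨k, hk⟩ := hodd
  have hhk : h = k + 1 := by omega
  have hph : p - h = k := by omega
  have e1 : p ^ 2 - 1 = 4 * (k * k + k) := by
    have : p ^ 2 = 4 * (k * k + k) + 1 := by subst hk; ring
    omega
  have e2 : (p - 1) ^ 2 = 4 * (k * k) := by
    have : p - 1 = 2 * k := by omega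
    rw [this]; ring
  have e3 : (p + 1) ^ 2 = 4 * ((k + 1) * (k + 1)) := by
    have : p + 1 = 2 * (k + 1) := by omega
    rw [this]; ring
  refine ⟨?_, ?_, ?_, ?_⟩
  · rw [key 1 0, c1, c0, hph, hhk, e1, Nat.mul_div_cancel_left _ (by norm_num : 0 < 4)]; ring
  · rw [key 0 1, c1, c0, hph, hhk, e1, Nat.mul_div_cancel_left _ (by norm_num : 0 < 4)]; ring
  · rw [key 0 0, c0, hph, e2, Nat.mul_div_cancel_left _ (by norm_num : 0 < 4)]
  · rw [key 1 1, c1, hhk, e3, Nat.mul_div_cancel_left _ (by norm_num : 0 < 4)]
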